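/- Fix integers 𝒩, N_b, N ≥ 1, a symmetric matrix A ∈ ℝ^{N×N}, a matrix B ∈ ℝ^{N×2𝒩}, and a symmetric matrix M ∈ ℝ^{2𝒩×2𝒩}. For R ∈ ℝ^{𝒩×N_b} let I_R = [[R,0],[0,R]] ∈ ℝ^{2𝒩×2N_b} and S(R) = (B I_R)ᵀ A (B I_R) ∈ ℝ^{2N_b×2N_b}, and define f(R) = −Tr( M I_R S(R)^{-1} I_Rᵀ ). If S(R) is invertible at a point R, then f is Fréchet differentiable at R and its derivative in the direction H ∈ ℝ^{𝒩×N_b} equals −2 Tr( Hᵀ ( M_A(R)^{++} + M_A(R)^{--} ) ), where M_A(R) = M I_R S(R)^{-1} − (Bᵀ A B) I_R S(R)^{-1} I_Rᵀ M I_R S(R)^{-1} ∈ ℝ^{2𝒩×2N_b}, and M_A(R)^{++}, M_A(R)^{--} ∈ ℝ^{𝒩×N_b} denote its top-left and bottom-right blocks. Equivalently, the gradient of f at R is −2(M_A(R)^{++} + M_A(R)^{--}). -/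

import Mathlib

open Matrix

attribute [local instance] Matrix.normedAddCommGroup Matrix.normedSpace

/-- For `R ∈ ℝ^{𝒩×N_b}`, the block-diagonal matrix `I_R = [[R,0],[0,R]]`. -/
noncomputable def blockDiag2 {p q : ℕ} (R : Matrix (Fin p) (Fin q) ℝ) :
    Matrix (Fin p ⊕ Fin p) (Fin q ⊕ Fin q) ℝ :=
  Matrix.fromBlocks R 0 0 R

/-- The overlap matrix `S(R) = (B I_R)ᵀ A (B I_R)`. -/
noncomputable def overlapS {𝒩 Nb N : ℕ} (A : Matrix (Fin N) (Fin N) ℝ)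
    (B : Matrix (Fin N) (Fin 𝒩 ⊕ Fin 𝒩) ℝ) (R : Matrix (Fin 𝒩) (Fin Nb) ℝ) :
    Matrix (Fin Nb ⊕ Fin Nb) (Fin Nb ⊕ Fin Nb) ℝ :=
  (B * blockDiag2 R)ᵀ * A * (B * blockDiag2 R)

/-- The matrix `M_A(R) = M I_R S(R)⁻¹ − (Bᵀ A B) I_R S(R)⁻¹ I_Rᵀ M I_R S(R)⁻¹`. -/
noncomputable def MA {𝒩 Nb N : ℕ} (A : Matrix (Fin N) (Fin N) ℝ)
    (B : Matrix (Fin N) (Fin 𝒩 ⊕ Fin 𝒩) ℝ)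
    (M : Matrix (Fin 𝒩 ⊕ Fin 𝒩) (Fin 𝒩 ⊕ Fin 𝒩) ℝ)
    (R : Matrix (Fin 𝒩) (Fin Nb) ℝ) :
    Matrix (Fin 𝒩 ⊕ Fin 𝒩) (Fin Nb ⊕ Fin Nb) ℝ :=
  M * blockDiag2 R * (overlapS A B R)⁻¹ -
    (Bᵀ * A * B) * blockDiag2 R * (overlapS A B R)⁻¹ * (blockDiag2 R)ᵀ *
      M * blockDiag2 R * (overlapS A B R)⁻¹

section Helpers

variable {α β γ : Type*} [Fintype α] [Fintype β] [Fintype γ]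

/-- Matrix multiplication as a bilinear map. -/
noncomputable def mulLM (α β γ : Type*) [Fintype β] :
    Matrix α β ℝ →ₗ[ℝ] Matrix β γ ℝ →ₗ[ℝ] Matrix α γ ℝ where
  toFun X :=
    { toFun := fun Y => X * Y
      map_add' := fun Y Z => Matrix.mul_add X Y Z
      map_smul' := fun c Y => (Matrix.mul_smul X c Y) }
  map_add' X Y := LinearMap.ext fun Z => Matrix.add_mul X Y Z
  map_smul' c X := LinearMap.ext fun Z => Matrix.smul_mul c X Z

/-- Matrix multiplication as a continuous bilinear map (entrywise sup norm). -/
noncomputable def mulCLM (α β γ : Type*) [Fintype α] [Fintype β] [Fintype γ] :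
    Matrix α β ℝ →L[ℝ] Matrix β γ ℝ →L[ℝ] Matrix α γ ℝ :=
  LinearMap.toContinuousLinearMap
    (((LinearMap.toContinuousLinearMap :
        (Matrix β γ ℝ →ₗ[ℝ] Matrix α γ ℝ) ≃ₗ[ℝ] (Matrix β γ ℝ →L[ℝ] Matrix α γ ℝ))).toLinearMap
      ∘ₗ mulLM α β γ)

@[simp] theorem mulCLM_apply (X : Matrix α β ℝ) (Y : Matrix β γ ℝ) :
    mulCLM α β γ X Y = X * Y := rfl

theorem HasFDerivAt.matmul {E : Type*} [NormedAddCommGroup E] [NormedSpace ℝ E]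
    {f : E → Matrix α β ℝ} {g : E → Matrix β γ ℝ}
    {f' : E →L[ℝ] Matrix α β ℝ} {g' : E →L[ℝ] Matrix β γ ℝ} {x : E}
    (hf : HasFDerivAt f f' x) (hg : HasFDerivAt g g' x) :
    HasFDerivAt (fun y => f y * g y)
      (@HAdd.hAdd (E →L[ℝ] Matrix α γ ℝ) (E →L[ℝ] Matrix α γ ℝ) (E →L[ℝ] Matrix α γ ℝ) _ ((mulCLM α β γ (f x)).comp g') (((mulCLM α β γ).flip (g x)).comp f')) x := by
  have h := ((mulCLM α β γ).isBoundedBilinearMap.hasFDerivAt (f x, g x)).comp x (hf.prodMk hg)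
  exact h


/-- transpose as a continuous linear map. -/
noncomputable def transCLM (α β : Type*) [Fintype α] [Fintype β] :
    Matrix α β ℝ →L[ℝ] Matrix β α ℝ :=
  LinearMap.toContinuousLinearMap
    { toFun := fun X => Xᵀ
      map_add' := Matrix.transpose_add
      map_smul' := Matrix.transpose_smul }

@[simp] theorem transCLM_apply (X : Matrix α β ℝ) : transCLM α β X = Xᵀ := rfl

/-- trace as a continuous linear map. -/
noncomputable def trCLM (α : Type*) [Fintype α] : Matrix α α ℝ →L[ℝ] ℝ :=
  LinearMap.toContinuousLinearMap (Matrix.traceLinearMap α ℝ ℝ)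

@[simp] theorem trCLM_apply (X : Matrix α α ℝ) : trCLM α X = X.trace := rfl

/-- matrix entry as a continuous linear map. -/
noncomputable def entryCLM (i : α) (j : β) : Matrix α β ℝ →L[ℝ] ℝ :=
  LinearMap.toContinuousLinearMap
    { toFun := fun X => X i j
      map_add' := fun _ _ => rfl
      map_smul' := fun _ _ => rfl }

@[simp] theorem entryCLM_apply (i : α) (j : β) (X : Matrix α β ℝ) : entryCLM i j X = X i j := rfl

theorem differentiable_prod_fun {E : Type*} [NormedAddCommGroup E] [NormedSpace ℝ E]
    {ι : Type*} (s : Finset ι) (g : ι → E → ℝ) (h : ∀ i, Differentiable ℝ (g i)) :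
    Differentiable ℝ (fun x => ∏ i ∈ s, g i x) := by
  classical
  induction s using Finset.induction with
  | empty => simp only [Finset.prod_empty]; exact differentiable_const (1 : ℝ)
  | insert _ _ hni ih =>
    simp only [Finset.prod_insert hni]
    exact (h _).mul ih

theorem differentiable_det [DecidableEq α] :
    Differentiable ℝ (fun Y : Matrix α α ℝ => Y.det) := by
  have : (fun Y : Matrix α α ℝ => Y.det)
      = fun Y => ∑ σ : Equiv.Perm α, ((Equiv.Perm.sign σ : ℤ) : ℝ) * ∏ i, Y (σ i) i := by
    funext Y; rw [Matrix.det_apply']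
  rw [this]
  refine Differentiable.fun_sum fun σ _ => Differentiable.const_mul ?_ _
  exact differentiable_prod_fun Finset.univ (fun i (Y : Matrix α α ℝ) => Y (σ i) i)
    (fun i => (entryCLM (σ i) i).differentiable)

theorem differentiable_matrix_entries {E : Type*} [NormedAddCommGroup E] [NormedSpace ℝ E]
    [DecidableEq α] [DecidableEq β] {f : E → Matrix α β ℝ}
    (h : ∀ i j, Differentiable ℝ fun x => f x i j) : Differentiable ℝ f := by
  have : f = fun x => ∑ i : α, ∑ j : β, (f x i j) • Matrix.single i j (1 : ℝ) := by
    funext x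
    conv_lhs => rw [Matrix.matrix_eq_sum_single (f x)]
    refine Finset.sum_congr rfl fun i _ => Finset.sum_congr rfl fun j _ => ?_
    rw [Matrix.smul_single, smul_eq_mul, mul_one]
  rw [this]
  exact Differentiable.fun_sum fun i _ => Differentiable.fun_sum fun j _ => (h i j).smul_const _

/-- update a row (with the new row 0) as a linear map. -/
noncomputable def updateRowLM [DecidableEq α] (j : α) :
    Matrix α α ℝ →ₗ[ℝ] Matrix α α ℝ where
  toFun Y := Y.updateRow j 0
  map_add' Y Z := by
    ext i k; by_cases h : i = j <;> simp [Matrix.updateRow_apply, h]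
  map_smul' c Y := by
    ext i k; by_cases h : i = j <;> simp [Matrix.updateRow_apply, h]

theorem differentiable_updateRow [DecidableEq α] (j : α) (c : α → ℝ) :
    Differentiable ℝ (fun Y : Matrix α α ℝ => Y.updateRow j c) := by
  have : (fun Y : Matrix α α ℝ => Y.updateRow j c)
      = fun Y => (updateRowLM j) Y + (0 : Matrix α α ℝ).updateRow j c := by
    funext Y; ext i k
    by_cases h : i = j <;> simp [Matrix.updateRow_apply, h, updateRowLM]
  rw [this]
  exact ((updateRowLM j).toContinuousLinearMap.differentiable).add_const _

theorem differentiable_adjugate [DecidableEq α] :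
    Differentiable ℝ (fun Y : Matrix α α ℝ => Y.adjugate) := by
  refine differentiable_matrix_entries fun i j => ?_
  have : (fun Y : Matrix α α ℝ => Y.adjugate i j)
      = fun Y => (Y.updateRow j (Pi.single i 1)).det := by
    funext Y; rw [Matrix.adjugate_apply]
  rw [this, show (fun Y : Matrix α α ℝ => (Y.updateRow j (Pi.single i 1)).det)
      = (fun Z : Matrix α α ℝ => Z.det) ∘ (fun Y : Matrix α α ℝ => Y.updateRow j (Pi.single i 1))
      from rfl]
  exact differentiable_det.comp (differentiable_updateRow j _)

theorem hasFDerivAt_matinv [DecidableEq α] (X : Matrix α α ℝ) (hX : IsUnit X.det) :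
    HasFDerivAt (fun Y : Matrix α α ℝ => Y⁻¹)
      (-((mulCLM α α α (X⁻¹)).comp ((mulCLM α α α).flip (X⁻¹)))) X := by
  have hdet : X.det ≠ 0 := by
    simpa [isUnit_iff_ne_zero] using hX
  have hdiff : DifferentiableAt ℝ (fun Y : Matrix α α ℝ => Y⁻¹) X := by
    have : (fun Y : Matrix α α ℝ => Y⁻¹) = fun Y => (Y.det)⁻¹ • Y.adjugate := by
      funext Y; rw [Matrix.inv_def, Ring.inverse_eq_inv]
    rw [this]
    exact (differentiable_det.differentiableAt.inv hdet).smul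
      differentiable_adjugate.differentiableAt
  obtain ⟨f', hf'⟩ := hdiff
  have hmul : HasFDerivAt (fun Y : Matrix α α ℝ => Y * Y⁻¹)
      (@HAdd.hAdd (Matrix α α ℝ →L[ℝ] Matrix α α ℝ) (Matrix α α ℝ →L[ℝ] Matrix α α ℝ) (Matrix α α ℝ →L[ℝ] Matrix α α ℝ) _ ((mulCLM α α α X).comp f') (((mulCLM α α α).flip (X⁻¹)).comp (ContinuousLinearMap.id ℝ _))) X :=
    (hasFDerivAt_id X).matmul hf'
  have hopen : IsOpen {Y : Matrix α α ℝ | Y.det ≠ 0} :=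
    isOpen_ne.preimage differentiable_det.continuous
  have hev : (fun Y : Matrix α α ℝ => Y * Y⁻¹) =ᶠ[nhds X] fun _ => (1 : Matrix α α ℝ) := by
    filter_upwards [hopen.mem_nhds hdet] with Y hY
    exact Matrix.mul_nonsing_inv Y (isUnit_iff_ne_zero.mpr hY)
  have hconst : HasFDerivAt (fun Y : Matrix α α ℝ => Y * Y⁻¹) 0 X :=
    (hasFDerivAt_const (𝕜 := ℝ) (1 : Matrix α α ℝ) X).congr_of_eventuallyEq hev
  have huniq := hmul.unique hconst
  have key : ∀ H : Matrix α α ℝ, f' H = -(X⁻¹ * (H * X⁻¹)) := by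
    intro H
    have h0 : X * f' H + H * X⁻¹ = 0 := by
      have := congrArg (fun (L : Matrix α α ℝ →L[ℝ] Matrix α α ℝ) => L H) huniq
      exact this
    have h1 : X * f' H = -(H * X⁻¹) := by linear_combination (norm := noncomm_ring) h0
    calc f' H = (X⁻¹ * X) * f' H := by rw [Matrix.nonsing_inv_mul X hX, Matrix.one_mul]
    _ = X⁻¹ * (X * f' H) := by rw [Matrix.mul_assoc]
    _ = -(X⁻¹ * (H * X⁻¹)) := by rw [h1, Matrix.mul_neg]
  have : (-((mulCLM α α α (X⁻¹)).comp ((mulCLM α α α).flip (X⁻¹)))) = f' := by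
    ext H
    exact (congrFun (congrFun (key H) _) _).symm
  rw [this]
  exact hf'

end Helpers

noncomputable def bdCLM (p q : ℕ) :
    Matrix (Fin p) (Fin q) ℝ →L[ℝ] Matrix (Fin p ⊕ Fin p) (Fin q ⊕ Fin q) ℝ :=
  LinearMap.toContinuousLinearMap
    { toFun := blockDiag2
      map_add' := by
        intro X Y; ext (i|i) (j|j) <;> simp [blockDiag2]
      map_smul' := by
        intro c X; ext (i|i) (j|j) <;> simp [blockDiag2] }

@[simp] theorem bdCLM_apply {p q : ℕ} (X : Matrix (Fin p) (Fin q) ℝ) :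
    bdCLM p q X = blockDiag2 X := rfl

theorem trace_fromBlocks' {a b : Type*} [Fintype a] [Fintype b]
    (X : Matrix a a ℝ) (Y : Matrix a b ℝ) (Z : Matrix b a ℝ) (W : Matrix b b ℝ) :
    (Matrix.fromBlocks X Y Z W).trace = X.trace + W.trace := by
  simp [Matrix.trace, Fintype.sum_sum_type, Matrix.diag]

theorem trace_blockDiag2 {p q : ℕ} (H : Matrix (Fin p) (Fin q) ℝ)
    (Nn : Matrix (Fin p ⊕ Fin p) (Fin q ⊕ Fin q) ℝ) :
    ((blockDiag2 H)ᵀ * Nn).trace = (Hᵀ * (Nn.toBlocks₁₁ + Nn.toBlocks₂₂)).trace := by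
  rw [← Matrix.fromBlocks_toBlocks Nn]
  show ((Matrix.fromBlocks H 0 0 H)ᵀ * (_ : Matrix (Fin p ⊕ Fin p) (Fin q ⊕ Fin q) ℝ)).trace = _
  rw [Matrix.fromBlocks_transpose, Matrix.fromBlocks_multiply, trace_fromBlocks']
  simp [Matrix.mul_add, Matrix.trace_add]

theorem tr_cyc {a b : Type*} [Fintype a] [Fintype b] (X : Matrix a b ℝ) (Y : Matrix b a ℝ) :
    (X * Y).trace = (Y * X).trace := Matrix.trace_mul_comm X Y


theorem key_trace {a b c : Type*} [Fintype a] [Fintype b] [Fintype c]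
    (M : Matrix a a ℝ) (A : Matrix c c ℝ) (Bb : Matrix c a ℝ)
    (DR DH : Matrix a b ℝ) (S : Matrix b b ℝ)
    (hM : Mᵀ = M) (hA : Aᵀ = A) (hS : Sᵀ = S) :
    -(M * DR * S * DHᵀ +
        (M * DR * -(S * (((Bb * DR)ᵀ * A * (Bb * DH) + (Bb * DH)ᵀ * A * (Bb * DR)) * S)) +
            M * DH * S) * DRᵀ).trace =
      -2 * (DHᵀ * (M * DR * S - Bbᵀ * A * Bb * DR * S * DRᵀ * M * DR * S)).trace := by
  simp only [Matrix.mul_add, Matrix.add_mul, Matrix.mul_neg, Matrix.neg_mul,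
    Matrix.mul_sub, Matrix.sub_mul, Matrix.trace_add, Matrix.trace_sub, Matrix.trace_neg,
    Matrix.transpose_mul, Matrix.mul_assoc]
  have e1 : (M * (DR * (S * DHᵀ))).trace = (DHᵀ * (M * (DR * S))).trace := by
    rw [tr_cyc M]; simp only [Matrix.mul_assoc]
    rw [tr_cyc DR]; simp only [Matrix.mul_assoc]
    rw [tr_cyc S]; simp only [Matrix.mul_assoc]
  have e2 : (M * (DH * (S * DRᵀ))).trace = (DHᵀ * (M * (DR * S))).trace := by
    conv_lhs => rw [← Matrix.trace_transpose]
    simp only [Matrix.transpose_mul, Matrix.transpose_transpose, Matrix.mul_assoc]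
    rw [hS, hM]
    rw [tr_cyc DR]; simp only [Matrix.mul_assoc]
    rw [tr_cyc S]; simp only [Matrix.mul_assoc]
  have e3 : (M * (DR * (S * (DHᵀ * (Bbᵀ * (A * (Bb * (DR * (S * DRᵀ))))))))).trace
      = (DHᵀ * (Bbᵀ * (A * (Bb * (DR * (S * (DRᵀ * (M * (DR * S))))))))).trace := by
    rw [tr_cyc M]; simp only [Matrix.mul_assoc]
    rw [tr_cyc DR]; simp only [Matrix.mul_assoc]
    rw [tr_cyc S]; simp only [Matrix.mul_assoc]
  have e4 : (M * (DR * (S * (DRᵀ * (Bbᵀ * (A * (Bb * (DH * (S * DRᵀ))))))))).trace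
      = (DHᵀ * (Bbᵀ * (A * (Bb * (DR * (S * (DRᵀ * (M * (DR * S))))))))).trace := by
    conv_lhs => rw [← Matrix.trace_transpose]
    simp only [Matrix.transpose_mul, Matrix.transpose_transpose, Matrix.mul_assoc]
    rw [hS, hM, hA]
    rw [tr_cyc DR]; simp only [Matrix.mul_assoc]
    rw [tr_cyc S]; simp only [Matrix.mul_assoc]
  rw [e1, e2, e3, e4]
  ring


/-- The function `f(R) = −Tr (M I_R S(R)⁻¹ I_Rᵀ)` is Fréchet differentiable at any `R`
where `S(R)` is invertible, with derivative
`H ↦ −2 Tr (Hᵀ (M_A(R)^{++} + M_A(R)^{--}))`. -/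
theorem stmt_8 (𝒩 Nb N : ℕ) (h𝒩 : 1 ≤ 𝒩) (hNb : 1 ≤ Nb) (hN : 1 ≤ N)
    (A : Matrix (Fin N) (Fin N) ℝ) (hA : A.IsSymm)
    (B : Matrix (Fin N) (Fin 𝒩 ⊕ Fin 𝒩) ℝ)
    (M : Matrix (Fin 𝒩 ⊕ Fin 𝒩) (Fin 𝒩 ⊕ Fin 𝒩) ℝ) (hM : M.IsSymm)
    (R : Matrix (Fin 𝒩) (Fin Nb) ℝ)
    (hinv : IsUnit (overlapS A B R)) :
    ∃ L : Matrix (Fin 𝒩) (Fin Nb) ℝ →L[ℝ] ℝ,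
      HasFDerivAt
        (fun R' : Matrix (Fin 𝒩) (Fin Nb) ℝ =>
          -(M * blockDiag2 R' * (overlapS A B R')⁻¹ * (blockDiag2 R')ᵀ).trace)
        L R ∧
      ∀ H : Matrix (Fin 𝒩) (Fin Nb) ℝ,
        L H = -2 * (Hᵀ * ((MA A B M R).toBlocks₁₁ + (MA A B M R).toBlocks₂₂)).trace := by
  classical
  have hdet : IsUnit (overlapS A B R).det := (Matrix.isUnit_iff_isUnit_det _).mp hinv
  let bd := bdCLM 𝒩 Nb
  let mM : Matrix (Fin 𝒩) (Fin Nb) ℝ →L[ℝ] Matrix (Fin 𝒩 ⊕ Fin 𝒩) (Fin Nb ⊕ Fin Nb) ℝ := (mulCLM (Fin 𝒩 ⊕ Fin 𝒩) (Fin 𝒩 ⊕ Fin 𝒩) (Fin Nb ⊕ Fin Nb) M).comp bd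
  let vB : Matrix (Fin 𝒩) (Fin Nb) ℝ →L[ℝ] Matrix (Fin N) (Fin Nb ⊕ Fin Nb) ℝ := (mulCLM (Fin N) (Fin 𝒩 ⊕ Fin 𝒩) (Fin Nb ⊕ Fin Nb) B).comp bd
  let uu : Matrix (Fin 𝒩) (Fin Nb) ℝ →L[ℝ] Matrix (Fin Nb ⊕ Fin Nb) (Fin N) ℝ :=
    ((mulCLM (Fin Nb ⊕ Fin Nb) (Fin N) (Fin N)).flip A).comp ((transCLM (Fin N) (Fin Nb ⊕ Fin Nb)).comp vB)
  let tC : Matrix (Fin 𝒩) (Fin Nb) ℝ →L[ℝ] Matrix (Fin Nb ⊕ Fin Nb) (Fin 𝒩 ⊕ Fin 𝒩) ℝ := (transCLM (Fin 𝒩 ⊕ Fin 𝒩) (Fin Nb ⊕ Fin Nb)).comp bd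
  have hS : HasFDerivAt (fun R' : Matrix (Fin 𝒩) (Fin Nb) ℝ => overlapS A B R')
      (@HAdd.hAdd (Matrix (Fin 𝒩) (Fin Nb) ℝ →L[ℝ] Matrix (Fin Nb ⊕ Fin Nb) (Fin Nb ⊕ Fin Nb) ℝ) (Matrix (Fin 𝒩) (Fin Nb) ℝ →L[ℝ] Matrix (Fin Nb ⊕ Fin Nb) (Fin Nb ⊕ Fin Nb) ℝ) (Matrix (Fin 𝒩) (Fin Nb) ℝ →L[ℝ] Matrix (Fin Nb ⊕ Fin Nb) (Fin Nb ⊕ Fin Nb) ℝ) _ ((mulCLM (Fin Nb ⊕ Fin Nb) (Fin N) (Fin Nb ⊕ Fin Nb) (uu R)).comp vB) (((mulCLM (Fin Nb ⊕ Fin Nb) (Fin N) (Fin Nb ⊕ Fin Nb)).flip (vB R)).comp uu)) R :=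
    HasFDerivAt.matmul (f := fun R' : Matrix (Fin 𝒩) (Fin Nb) ℝ => (B * blockDiag2 R')ᵀ * A)
      (g := fun R' : Matrix (Fin 𝒩) (Fin Nb) ℝ => B * blockDiag2 R') (uu.hasFDerivAt) (vB.hasFDerivAt)
  have hiv : HasFDerivAt (fun R' : Matrix (Fin 𝒩) (Fin Nb) ℝ => (overlapS A B R')⁻¹)
      ((-((mulCLM (Fin Nb ⊕ Fin Nb) (Fin Nb ⊕ Fin Nb) (Fin Nb ⊕ Fin Nb) ((overlapS A B R)⁻¹)).comp
          ((mulCLM (Fin Nb ⊕ Fin Nb) (Fin Nb ⊕ Fin Nb) (Fin Nb ⊕ Fin Nb)).flip ((overlapS A B R)⁻¹)))).comp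
        (@HAdd.hAdd (Matrix (Fin 𝒩) (Fin Nb) ℝ →L[ℝ] Matrix (Fin Nb ⊕ Fin Nb) (Fin Nb ⊕ Fin Nb) ℝ) (Matrix (Fin 𝒩) (Fin Nb) ℝ →L[ℝ] Matrix (Fin Nb ⊕ Fin Nb) (Fin Nb ⊕ Fin Nb) ℝ) (Matrix (Fin 𝒩) (Fin Nb) ℝ →L[ℝ] Matrix (Fin Nb ⊕ Fin Nb) (Fin Nb ⊕ Fin Nb) ℝ) _ ((mulCLM (Fin Nb ⊕ Fin Nb) (Fin N) (Fin Nb ⊕ Fin Nb) (uu R)).comp vB) (((mulCLM (Fin Nb ⊕ Fin Nb) (Fin N) (Fin Nb ⊕ Fin Nb)).flip (vB R)).comp uu))) R :=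
    (hasFDerivAt_matinv _ hdet).comp R hS
  have hUV := HasFDerivAt.matmul (f := fun R' : Matrix (Fin 𝒩) (Fin Nb) ℝ => M * blockDiag2 R')
      (g := fun R' : Matrix (Fin 𝒩) (Fin Nb) ℝ => (overlapS A B R')⁻¹) (mM.hasFDerivAt) hiv
  have hW := HasFDerivAt.matmul
      (g := fun R' : Matrix (Fin 𝒩) (Fin Nb) ℝ => (blockDiag2 R')ᵀ) hUV (tC.hasFDerivAt)
  have hfin := (((trCLM (Fin 𝒩 ⊕ Fin 𝒩)).hasFDerivAt.comp R hW).neg :)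
  refine ⟨_, hfin, ?_⟩
  intro H
  simp only [ContinuousLinearMap.neg_apply, ContinuousLinearMap.comp_apply,
    ContinuousLinearMap.add_apply, ContinuousLinearMap.flip_apply, mulCLM_apply,
    bdCLM_apply, transCLM_apply, trCLM_apply, mM, vB, uu, tC, bd]
  have hSsym : (overlapS A B R)ᵀ = overlapS A B R := by
    simp [overlapS, Matrix.transpose_mul, Matrix.mul_assoc, hA.eq]
  have hSi : ((overlapS A B R)⁻¹)ᵀ = (overlapS A B R)⁻¹ := by
    rw [Matrix.transpose_nonsing_inv, hSsym]
  rw [← trace_blockDiag2 H (MA A B M R)]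
  simp only [MA]
  exact key_trace M A B (blockDiag2 R) (blockDiag2 H) ((overlapS A B R)⁻¹) hM.eq hA.eq hSi
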